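/- arXiv:2405.08358 — 4 statements merged into one kernel-verified Lean document; each statement's English description precedes it below -/
import Mathlib

section
/- Let λ > 0 and f ∈ L¹(∂T, ν). Then ν({ω ∈ ∂T : ℳf(ω) > λ}) ≤ λ⁻¹ ‖f‖_{L¹(ν)}; that is, the Hardy–Littlewood maximal operator ℳ associated with ν is of weak type (1,1) with constant at most 1. -/
set_option maxHeartbeats 1000000


open MeasureTheory
open scoped ENNReal NNReal

/-- The punctured boundary `∂T` of the tree: maps `ω : ℤ → T` with `lev (ω j) = j`
and `par (ω j) = ω (j+1)`. -/
def PBoundary {T : Type*} (par : T → T) (lev : T → ℤ) : Type _ :=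
  {ω : ℤ → T // (∀ j : ℤ, lev (ω j) = j) ∧ ∀ j : ℤ, par (ω j) = ω (j + 1)}

/-- The boundary sector `∂T_x`. -/
def sector {T : Type*} (par : T → T) (lev : T → ℤ) (x : T) : Set (PBoundary par lev) :=
  {ω : PBoundary par lev | ω.1 (lev x) = x}

/-- The σ-algebra on `∂T` generated by the sectors. -/
instance {T : Type*} (par : T → T) (lev : T → ℤ) : MeasurableSpace (PBoundary par lev) :=
  MeasurableSpace.generateFrom (Set.range (sector par lev))

/-- The flow measure `m_ν x = ν (∂T_x)` (as a real number). -/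
noncomputable def mnu {T : Type*} (par : T → T) (lev : T → ℤ)
    (ν : Measure (PBoundary par lev)) (x : T) : ℝ :=
  (ν (sector par lev x)).toReal

/-- The Hardy–Littlewood maximal operator associated with `ν`. -/
noncomputable def maximal {T : Type*} (par : T → T) (lev : T → ℤ)
    (ν : Measure (PBoundary par lev)) (f : PBoundary par lev → ℝ)
    (ω : PBoundary par lev) : ℝ≥0∞ :=
  ⨆ x : {x : T // ω.1 (lev x) = x},
    (ν (sector par lev x.1))⁻¹ * ∫⁻ ξ in sector par lev x.1, ENNReal.ofReal |f ξ| ∂ν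

section Aux

variable {T : Type*} (par : T → T) (lev : T → ℤ)

/-- Along a boundary ray, moving `n` steps corresponds to `n` applications of `par`. -/
lemma pb_iterate (ω : PBoundary par lev) (j : ℤ) (n : ℕ) :
    ω.1 (j + n) = par^[n] (ω.1 j) := by
  induction n with
  | zero => simp
  | succ n ih =>
    have h1 : (j + ((n : ℤ) + 1)) = (j + (n : ℤ)) + 1 := by ring
    have h2 := (ω.2.2 (j + (n : ℤ))).symm
    rw [Function.iterate_succ_apply', ← ih]
    push_cast
    rw [h1, h2]

lemma lev_iterate (hlev : ∀ x : T, lev (par x) = lev x + 1) (x : T) (n : ℕ) :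
    lev (par^[n] x) = lev x + n := by
  induction n with
  | zero => simp
  | succ n ih =>
    rw [Function.iterate_succ_apply', hlev, ih]
    push_cast; ring

lemma sector_subset_iterate (hlev : ∀ x : T, lev (par x) = lev x + 1) (x : T) (n : ℕ) :
    sector par lev x ⊆ sector par lev (par^[n] x) := by
  intro ω hω
  have hx : ω.1 (lev x) = x := hω
  show ω.1 (lev (par^[n] x)) = par^[n] x
  rw [lev_iterate par lev hlev, pb_iterate par lev ω (lev x) n, hx]

lemma sector_eq_iterate (hlev : ∀ x : T, lev (par x) = lev x + 1) {x y : T}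
    {ω : PBoundary par lev} (hx : ω ∈ sector par lev x) (hy : ω ∈ sector par lev y)
    (h : lev x ≤ lev y) : y = par^[(lev y - lev x).toNat] x := by
  have hx' : ω.1 (lev x) = x := hx
  have hy' : ω.1 (lev y) = y := hy
  have hn : lev y = lev x + ((lev y - lev x).toNat : ℤ) := by
    rw [Int.toNat_of_nonneg (sub_nonneg.2 h)]; ring
  calc y = ω.1 (lev y) := hy'.symm
    _ = ω.1 (lev x + ((lev y - lev x).toNat : ℤ)) := by rw [← hn]
    _ = par^[(lev y - lev x).toNat] (ω.1 (lev x)) := pb_iterate par lev ω (lev x) _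
    _ = par^[(lev y - lev x).toNat] x := by rw [hx']

lemma fiber_finite (hfin : ∀ x : T, {y : T | par y = x}.Finite) (k : ℕ) :
    ∀ z : T, {y : T | par^[k] y = z}.Finite := by
  induction k with
  | zero => intro z; simp only [Function.iterate_zero, id_eq]
            exact (Set.finite_singleton z).subset (by intro y hy; exact hy)
  | succ k ih =>
    intro z
    have hsub : {y : T | par^[k+1] y = z} ⊆ ⋃ w ∈ {w : T | par^[k] w = z}, {y : T | par y = w} := by
      intro y hy
      have hy' : par^[k] (par y) = z := by
        rw [← Function.iterate_succ_apply]; exact hy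
      exact Set.mem_biUnion hy' rfl
    exact Set.Finite.subset ((ih z).biUnion (fun w _ => hfin w)) hsub

lemma tree_countable [Nonempty T] (hfin : ∀ x : T, {y : T | par y = x}.Finite)
    (hconn : ∀ x y : T, ∃ n m : ℕ, par^[n] x = par^[m] y) : Countable T := by
  have x0 : T := Classical.arbitrary T
  have hsub : (Set.univ : Set T) ⊆ ⋃ (n : ℕ) (k : ℕ), {y : T | par^[k] y = par^[n] x0} := by
    intro y _
    obtain ⟨k, n, h⟩ := hconn y x0
    exact Set.mem_iUnion.2 ⟨n, Set.mem_iUnion.2 ⟨k, h⟩⟩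
  have hc : (Set.univ : Set T).Countable :=
    Set.Countable.mono hsub (Set.countable_iUnion fun n =>
      Set.countable_iUnion fun k => (fiber_finite par hfin k (par^[n] x0)).countable)
  exact Set.countable_univ_iff.mp hc

end Aux

/-- The Hardy–Littlewood maximal operator on `∂T` is of weak type `(1,1)`
with constant at most `1`. -/
theorem stmt0 {T : Type*} [Nonempty T] (par : T → T) (lev : T → ℤ)
    (hlev : ∀ x : T, lev (par x) = lev x + 1)
    (hfin : ∀ x : T, {y : T | par y = x}.Finite)
    (hsucc : ∀ x : T, ∃ y : T, par y = x)
    (hconn : ∀ x y : T, ∃ n m : ℕ, par^[n] x = par^[m] y)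
    (ν : Measure (PBoundary par lev))
    (hν : ∀ x : T, 0 < ν (sector par lev x) ∧ ν (sector par lev x) < ⊤)
    (f : PBoundary par lev → ℝ) (hf : Integrable f ν)
    (lam : ℝ) (hlam : 0 < lam) :
    ν {ω : PBoundary par lev | ENNReal.ofReal lam < maximal par lev ν f ω}
      ≤ ENNReal.ofReal (lam⁻¹ * ∫ ω, |f ω| ∂ν) := by
  classical
  have msec : ∀ x : T, MeasurableSet (sector par lev x) := fun x =>
    MeasurableSpace.measurableSet_generateFrom ⟨x, rfl⟩
  set I := ∫⁻ ω, ENNReal.ofReal |f ω| ∂ν with hIdef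
  set L := ENNReal.ofReal lam with hLdef
  have hL0 : L ≠ 0 := (ENNReal.ofReal_pos.2 hlam).ne'
  have hLtop : L ≠ ⊤ := ENNReal.ofReal_ne_top
  have hRHS : ENNReal.ofReal (lam⁻¹ * ∫ ω, |f ω| ∂ν) = L⁻¹ * I := by
    rw [ENNReal.ofReal_mul (by positivity), ENNReal.ofReal_inv_of_pos hlam, hLdef, hIdef,
      ofReal_integral_eq_lintegral_ofReal hf.abs
        (Filter.Eventually.of_forall fun ω => abs_nonneg _)]
  rw [hRHS]
  set E := {ω : PBoundary par lev | L < maximal par lev ν f ω} with hEdef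
  suffices hmain : L * ν E ≤ I by
    rw [← ENNReal.div_eq_inv_mul]
    exact (ENNReal.le_div_iff_mul_le (Or.inl hL0) (Or.inl hLtop)).2 (by rwa [mul_comm])
  set Bad : Set T := {x : T | L * ν (sector par lev x)
      < ∫⁻ ξ in sector par lev x, ENNReal.ofReal |f ξ| ∂ν} with hBaddef
  have hEsub : E ⊆ ⋃ x ∈ Bad, sector par lev x := by
    intro ω hω
    have hω' : L < maximal par lev ν f ω := hω
    rw [maximal, lt_iSup_iff] at hω'
    obtain ⟨⟨x, hx⟩, hxv⟩ := hω'
    refine Set.mem_biUnion ?_ hx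
    have h0 := (hν x).1.ne'
    have ht := (hν x).2.ne
    have hdiv : L < (∫⁻ ξ in sector par lev x, ENNReal.ofReal |f ξ| ∂ν)
        / ν (sector par lev x) := by rwa [ENNReal.div_eq_inv_mul]
    exact (ENNReal.lt_div_iff_mul_lt (Or.inl h0) (Or.inl ht)).mp hdiv
  have hBadI : ∀ x ∈ Bad, L * ν (sector par lev x) ≤ I := fun x hx =>
    le_trans hx.le (setLIntegral_le_lintegral _ _)
  by_cases hA : ∃ x : T, ∀ N : ℕ, ∃ n, N ≤ n ∧ par^[n] x ∈ Bad
  · -- infinitely many bad ancestors: bound by the measure of the whole boundary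
    obtain ⟨x, hx⟩ := hA
    have hmono : Monotone (fun n : ℕ => sector par lev (par^[n] x)) := by
      apply monotone_nat_of_le_succ
      intro n
      have h1 := sector_subset_iterate par lev hlev (par^[n] x) 1
      simpa [← Function.iterate_succ_apply'] using h1
    have huniv : (Set.univ : Set (PBoundary par lev))
        = ⋃ n : ℕ, sector par lev (par^[n] x) := by
      ext ω
      simp only [Set.mem_univ, true_iff, Set.mem_iUnion]
      obtain ⟨n, m, h⟩ := hconn x (ω.1 0)
      refine ⟨n, ?_⟩
      show ω.1 (lev (par^[n] x)) = par^[n] x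
      rw [h]
      have h0 : lev (ω.1 0) = 0 := ω.2.1 0
      have hl : lev (par^[m] (ω.1 0)) = (m : ℤ) := by
        rw [lev_iterate par lev hlev, h0, zero_add]
      rw [hl]
      have hit := pb_iterate par lev ω 0 m
      rw [zero_add] at hit
      exact hit
    have hνu : ν Set.univ = ⨆ n, ν (sector par lev (par^[n] x)) := by
      rw [huniv]
      exact (hmono.directed_le).measure_iUnion
    calc L * ν E ≤ L * ν Set.univ := mul_le_mul_right (measure_mono (Set.subset_univ _)) L
      _ = ⨆ n, L * ν (sector par lev (par^[n] x)) := by rw [hνu, ENNReal.mul_iSup]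
      _ ≤ I := by
          refine iSup_le fun n => ?_
          obtain ⟨m, hnm, hm⟩ := hx n
          exact le_trans (mul_le_mul_right (measure_mono (hmono hnm)) L) (hBadI _ hm)
  · -- every bad vertex has a maximal bad ancestor
    push_neg at hA
    have hT : Countable T := tree_countable par hfin hconn
    set M : Set T := {y : T | y ∈ Bad ∧ ∀ n : ℕ, 1 ≤ n → par^[n] y ∉ Bad} with hMdef
    have hanc : ∀ x ∈ Bad, ∃ y ∈ M, sector par lev x ⊆ sector par lev y := by
      intro x hx
      obtain ⟨N, hN⟩ := hA x
      set P : ℕ → Prop := fun n => par^[n] x ∈ Bad with hPdef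
      set n0 := Nat.findGreatest P N with hn0def
      have hP0 : P 0 := by simpa [hPdef] using hx
      have hn0 : P n0 := Nat.findGreatest_spec (Nat.zero_le N) hP0
      refine ⟨par^[n0] x, ⟨hn0, ?_⟩, sector_subset_iterate par lev hlev x n0⟩
      intro n hn
      rw [← Function.iterate_add_apply]
      by_cases hcase : n + n0 ≤ N
      · exact Nat.findGreatest_is_greatest (P := P) (n := N) (by omega) hcase
      · exact hN _ (by omega)
    have hEM : E ⊆ ⋃ y : M, sector par lev y.1 := by
      intro ω hω
      obtain ⟨x, hx, hωx⟩ := Set.mem_iUnion₂.mp (hEsub hω)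
      obtain ⟨y, hy, hsub⟩ := hanc x hx
      exact Set.mem_iUnion.2 ⟨⟨y, hy⟩, hsub hωx⟩
    have key2 : ∀ y z : M, lev y.1 ≤ lev z.1 →
        (sector par lev y.1 ∩ sector par lev z.1).Nonempty → y = z := by
      rintro y z h ⟨ω, hωy, hωz⟩
      have heq := sector_eq_iterate par lev hlev hωy hωz h
      set n := (lev z.1 - lev y.1).toNat with hndef
      rcases Nat.eq_zero_or_pos n with h0 | h1
      · apply Subtype.ext
        rw [heq, h0, Function.iterate_zero, id_eq]
      · exact absurd (heq ▸ z.2.1) (y.2.2 n h1)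
    have hdisj : Pairwise (Function.onFun Disjoint fun y : M => sector par lev y.1) := by
      intro y z hyz
      rw [Function.onFun]
      rw [Set.disjoint_iff_inter_eq_empty]
      by_contra hne
      have hnon : (sector par lev y.1 ∩ sector par lev z.1).Nonempty :=
        Set.nonempty_iff_ne_empty.2 hne
      rcases le_total (lev y.1) (lev z.1) with h | h
      · exact hyz (key2 y z h hnon)
      · exact hyz ((key2 z y h (Set.inter_comm _ _ ▸ hnon)).symm)
    have hm1 : ν (⋃ y : M, sector par lev y.1) = ∑' y : M, ν (sector par lev y.1) :=
      measure_iUnion hdisj (fun y => msec y.1)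
    have hm2 : ∫⁻ ξ in ⋃ y : M, sector par lev y.1, ENNReal.ofReal |f ξ| ∂ν
        = ∑' y : M, ∫⁻ ξ in sector par lev y.1, ENNReal.ofReal |f ξ| ∂ν :=
      lintegral_iUnion (μ := ν) (s := fun y : M => sector par lev y.1)
        (fun y => msec y.1) hdisj (fun ξ => ENNReal.ofReal |f ξ|)
    have hm3 : ∀ y : M, L * ν (sector par lev y.1)
        ≤ ∫⁻ ξ in sector par lev y.1, ENNReal.ofReal |f ξ| ∂ν := by
      intro y
      have hy : y.1 ∈ Bad := y.2.1
      rw [hBaddef] at hy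
      exact le_of_lt hy
    calc L * ν E ≤ L * ν (⋃ y : M, sector par lev y.1) :=
          mul_le_mul_right (measure_mono hEM) L
      _ = ∑' y : M, L * ν (sector par lev y.1) := by rw [hm1, ENNReal.tsum_mul_left]
      _ ≤ ∑' y : M, ∫⁻ ξ in sector par lev y.1, ENNReal.ofReal |f ξ| ∂ν :=
          ENNReal.tsum_le_tsum hm3
      _ = ∫⁻ ξ in ⋃ y : M, sector par lev y.1, ENNReal.ofReal |f ξ| ∂ν := hm2.symm
      _ ≤ I := setLIntegral_le_lintegral _ _
end

section
/- Let f : T → ℝ be a bounded harmonic function on T which admits a boundary extension g : ∂T → ℝ, i.e. for ν-almost every ω ∈ ∂T one has lim_{j → −∞} f(ω(j)) = g(ω). Then g is integrable on every sector ∂T_x and f(x) = (1/m_ν(x)) ∫_{∂T_x} g dν for every x ∈ T. -/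
open MeasureTheory
open scoped ENNReal NNReal

/-- A function on `T` is harmonic if `Δf(x) = f(x) - Σ_{y ∈ s(x)} f(y) m_ν(y)/m_ν(x) = 0`
for every vertex `x`. -/
def Harmonic {T : Type*} (par : T → T) (lev : T → ℤ)
    (ν : Measure (PBoundary par lev)) (f : T → ℝ) : Prop :=
  ∀ x : T, f x = ∑ᶠ y ∈ {y : T | par y = x}, f y * (mnu par lev ν y / mnu par lev ν x)

/-- A bounded harmonic function on `T` admitting a boundary extension `g`
is the Poisson integral of `g`: `g` is integrable on every sector and
`f(x) = m_ν(x)⁻¹ ∫_{∂T_x} g dν` for every `x ∈ T`. -/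
theorem stmt3 {T : Type*} [Nonempty T] (par : T → T) (lev : T → ℤ)
    (hlev : ∀ x : T, lev (par x) = lev x + 1)
    (hfin : ∀ x : T, {y : T | par y = x}.Finite)
    (hsucc : ∀ x : T, ∃ y : T, par y = x)
    (hconn : ∀ x y : T, ∃ n m : ℕ, par^[n] x = par^[m] y)
    (ν : Measure (PBoundary par lev))
    (hν : ∀ x : T, 0 < ν (sector par lev x) ∧ ν (sector par lev x) < ⊤)
    (f : T → ℝ) (hf : Harmonic par lev ν f)
    (M : ℝ) (hbdd : ∀ x : T, |f x| ≤ M)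
    (g : PBoundary par lev → ℝ)
    (hext : ∀ᵐ ω ∂ν,
      Filter.Tendsto (fun j : ℤ => f (ω.1 j)) Filter.atBot (nhds (g ω))) :
    (∀ x : T, IntegrableOn g (sector par lev x) ν) ∧
      ∀ x : T, f x = (mnu par lev ν x)⁻¹ * ∫ ω in sector par lev x, g ω ∂ν := by
  
  classical
  -- T is countable
  have hfinN : ∀ (n : ℕ) (a : T), {y : T | par^[n] y = a}.Finite := by
    intro n
    induction n with
    | zero => intro a; simpa using Set.finite_singleton a
    | succ n ih =>
      intro a
      have hsubset : {y : T | par^[n+1] y = a} ⊆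
          ⋃ z ∈ (hfin a).toFinset, {y : T | par^[n] y = z} := by
        intro y hy
        simp only [Set.mem_iUnion, Set.Finite.mem_toFinset, Set.mem_setOf_eq]
        refine ⟨par^[n] y, ?_, rfl⟩
        simpa [Function.iterate_succ_apply'] using hy
      exact Set.Finite.subset
        (Set.Finite.biUnion ((hfin a).toFinset.finite_toSet) fun z _ => ih z) hsubset
  haveI : Countable T := by
    obtain ⟨x₀⟩ := ‹Nonempty T›
    have hsub : (Set.univ : Set T) ⊆ ⋃ (m : ℕ) (n : ℕ), {y : T | par^[n] y = par^[m] x₀} := by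
      intro y _
      obtain ⟨n, m, h⟩ := hconn y x₀
      simp only [Set.mem_iUnion, Set.mem_setOf_eq]
      exact ⟨m, n, h⟩
    have hc : (Set.univ : Set T).Countable :=
      Set.Countable.mono hsub
        (Set.countable_iUnion fun m => Set.countable_iUnion fun n => (hfinN n _).countable)
    exact Set.countable_univ_iff.mp hc
  have hsec_meas : ∀ x : T, MeasurableSet (sector par lev x) := fun x =>
    MeasurableSpace.measurableSet_generateFrom (Set.mem_range_self x)
  have hlevy : ∀ {x y : T}, par y = x → lev y = lev x - 1 := by
    intro x y h
    have h2 := hlev y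
    rw [h] at h2
    omega
  -- decomposition of the sector
  have hdecomp : ∀ x : T, sector par lev x = ⋃ y ∈ (hfin x).toFinset, sector par lev y := by
    intro x
    ext ω
    simp only [Set.mem_iUnion, Set.Finite.mem_toFinset, Set.mem_setOf_eq]
    constructor
    · intro hω
      refine ⟨ω.1 (lev x - 1), ?_, ?_⟩
      · have h2 := ω.2.2 (lev x - 1)
        rw [sub_add_cancel] at h2
        rw [h2]
        exact hω
      · show ω.1 (lev (ω.1 (lev x - 1))) = ω.1 (lev x - 1)
        rw [ω.2.1 (lev x - 1)]
    · rintro ⟨y, hpy, hωy⟩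
      have hly : lev y = lev x - 1 := hlevy hpy
      have h2 := ω.2.2 (lev y)
      have hωy' : ω.1 (lev y) = y := hωy
      rw [hωy', hpy] at h2
      show ω.1 (lev x) = x
      have h3 : lev y + 1 = lev x := by omega
      rw [← h3]
      exact h2.symm
  -- measurability of the slice functions
  have hφmeas : ∀ j : ℤ, Measurable (fun ω : PBoundary par lev => f (ω.1 j)) := by
    intro j s _
    have hpre : (fun ω : PBoundary par lev => f (ω.1 j)) ⁻¹' s
        = ⋃ x ∈ {x : T | lev x = j ∧ f x ∈ s}, sector par lev x := by
      ext ω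
      simp only [Set.mem_iUnion, Set.mem_preimage, Set.mem_setOf_eq]
      constructor
      · intro h
        refine ⟨ω.1 j, ⟨ω.2.1 j, h⟩, ?_⟩
        show ω.1 (lev (ω.1 j)) = ω.1 j
        rw [ω.2.1 j]
      · rintro ⟨x, ⟨hx1, hx2⟩, hx3⟩
        have h3 : ω.1 j = x := by rw [← hx1]; exact hx3
        rwa [h3]
    rw [hpre]
    exact MeasurableSet.biUnion (Set.to_countable _) fun x _ => hsec_meas x
  have hfinres : ∀ x : T, IsFiniteMeasure (ν.restrict (sector par lev x)) := fun x =>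
    ⟨by rw [Measure.restrict_apply_univ]; exact (hν x).2⟩
  have hφint : ∀ (j : ℤ) (x : T),
      IntegrableOn (fun ω : PBoundary par lev => f (ω.1 j)) (sector par lev x) ν := by
    intro j x
    haveI := hfinres x
    refine Integrable.mono' (integrable_const M) ((hφmeas j).aestronglyMeasurable) ?_
    exact Filter.Eventually.of_forall fun ω => by
      simpa [Real.norm_eq_abs] using hbdd (ω.1 j)
  have hmpos : ∀ x : T, 0 < mnu par lev ν x := fun x =>
    ENNReal.toReal_pos (hν x).1.ne' (hν x).2.ne
  -- the key identity
  have key : ∀ (N : ℕ) (x : T),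
      ∫ ω in sector par lev x, f (ω.1 (lev x - (N : ℤ))) ∂ν = f x * mnu par lev ν x := by
    intro N
    induction N with
    | zero =>
      intro x
      have heq : Set.EqOn (fun ω : PBoundary par lev => f (ω.1 (lev x - ((0:ℕ) : ℤ))))
          (fun _ => f x) (sector par lev x) := by
        intro ω hω
        simp only [Nat.cast_zero, sub_zero]
        rw [hω]
      rw [setIntegral_congr_fun (hsec_meas x) heq, setIntegral_const]
      simp [mnu, smul_eq_mul, mul_comm, Measure.real]
    | succ N ih =>
      intro x
      have hpd : Set.Pairwise ((hfin x).toFinset : Set T)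
          (Function.onFun Disjoint fun y => sector par lev y) := by
        intro y hy z hz hne
        simp only [Function.onFun]
        rw [Set.disjoint_left]
        intro ω hωy hωz
        have hpy : par y = x := by simpa [Set.Finite.mem_toFinset] using hy
        have hpz : par z = x := by simpa [Set.Finite.mem_toFinset] using hz
        have hωy' : ω.1 (lev y) = y := hωy
        have hωz' : ω.1 (lev z) = z := hωz
        apply hne
        rw [← hωy', ← hωz', hlevy hpy, hlevy hpz]
      rw [hdecomp x,
        integral_biUnion_finset (hfin x).toFinset (fun y _ => hsec_meas y) hpd
          (fun y _ => hφint _ y)]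
      have hterm : ∀ y ∈ (hfin x).toFinset,
          ∫ ω in sector par lev y, f (ω.1 (lev x - ((N+1 : ℕ) : ℤ))) ∂ν
            = f y * mnu par lev ν y := by
        intro y hy
        have hpy : par y = x := by simpa [Set.Finite.mem_toFinset] using hy
        have hidx : lev x - ((N+1 : ℕ) : ℤ) = lev y - (N : ℤ) := by
          have := hlevy hpy
          push_cast
          omega
        rw [hidx]
        exact ih y
      rw [Finset.sum_congr rfl hterm]
      have hharm := hf x
      rw [show {y : T | par y = x} = ((hfin x).toFinset : Set T) from
        (Set.Finite.coe_toFinset _).symm, finsum_mem_coe_finset] at hharm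
      have h0 : mnu par lev ν x ≠ 0 := (hmpos x).ne'
      calc ∑ y ∈ (hfin x).toFinset, f y * mnu par lev ν y
          = (∑ y ∈ (hfin x).toFinset, f y * (mnu par lev ν y / mnu par lev ν x))
              * mnu par lev ν x := by
            rw [Finset.sum_mul]
            refine Finset.sum_congr rfl fun y _ => ?_
            field_simp
        _ = f x * mnu par lev ν x := by rw [← hharm]
  -- the main conclusion via dominated convergence
  have main : ∀ x : T, IntegrableOn g (sector par lev x) ν ∧
      ∫ ω in sector par lev x, g ω ∂ν = f x * mnu par lev ν x := by
    intro x
    haveI := hfinres x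
    have hFmeas : ∀ n : ℕ,
        AEStronglyMeasurable (fun ω : PBoundary par lev => f (ω.1 (-(n : ℤ))))
          (ν.restrict (sector par lev x)) :=
      fun n => ((hφmeas _).aestronglyMeasurable).restrict
    have hbound : ∀ n : ℕ, ∀ᵐ ω ∂ν.restrict (sector par lev x),
        ‖f (ω.1 (-(n : ℤ)))‖ ≤ M :=
      fun n => Filter.Eventually.of_forall fun ω => by
        simpa [Real.norm_eq_abs] using hbdd (ω.1 (-(n : ℤ)))
    have hlimμ : ∀ᵐ ω ∂ν.restrict (sector par lev x),
        Filter.Tendsto (fun n : ℕ => f (ω.1 (-(n : ℤ)))) Filter.atTop (nhds (g ω)) := by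
      refine (ae_restrict_of_ae hext).mono fun ω hω => ?_
      exact hω.comp (Filter.tendsto_neg_atTop_atBot.comp tendsto_natCast_atTop_atTop)
    have hgmeas : AEStronglyMeasurable g (ν.restrict (sector par lev x)) :=
      aestronglyMeasurable_of_tendsto_ae _ hFmeas hlimμ
    have hgbound : ∀ᵐ ω ∂ν.restrict (sector par lev x), ‖g ω‖ ≤ M := by
      refine hlimμ.mono fun ω hω => ?_
      exact le_of_tendsto' hω.norm fun n => by
        simpa [Real.norm_eq_abs] using hbdd (ω.1 (-(n : ℤ)))
    have hint : Integrable g (ν.restrict (sector par lev x)) :=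
      Integrable.mono' (integrable_const M) hgmeas hgbound
    have htend := tendsto_integral_of_dominated_convergence (fun _ => M) hFmeas
      (integrable_const M) hbound hlimμ
    have hconst : ∀ᶠ n : ℕ in Filter.atTop,
        ∫ ω in sector par lev x, f (ω.1 (-(n : ℤ))) ∂ν = f x * mnu par lev ν x := by
      filter_upwards [Filter.eventually_ge_atTop (-(lev x)).toNat] with n hn
      have hle : -(n : ℤ) ≤ lev x := by
        have h2 : -lev x ≤ (n : ℤ) := Int.toNat_le.mp hn
        omega
      have hidx : (-(n : ℤ)) = lev x - (((lev x + n).toNat : ℕ) : ℤ) := by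
        rw [Int.toNat_of_nonneg (by omega)]
        ring
      rw [hidx]
      exact key _ x
    have htend' : Filter.Tendsto
        (fun n : ℕ => ∫ ω in sector par lev x, f (ω.1 (-(n : ℤ))) ∂ν)
        Filter.atTop (nhds (f x * mnu par lev ν x)) :=
      Filter.Tendsto.congr' (Filter.EventuallyEq.symm hconst) tendsto_const_nhds
    exact ⟨hint, tendsto_nhds_unique htend htend'⟩
  refine ⟨fun x => (main x).1, fun x => ?_⟩
  have h0 : mnu par lev ν x ≠ 0 := (hmpos x).ne'
  rw [(main x).2, mul_comm (f x), ← mul_assoc, inv_mul_cancel₀ h0, one_mul]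
end

section
/- Let g : ∂T → ℝ be integrable on every sector ∂T_x (i.e. g ∈ L¹_loc(∂T, ν)). Then the function f defined by f(x) = (1/m_ν(x)) ∫_{∂T_x} g dν is harmonic on T. -/
open MeasureTheory
open scoped ENNReal NNReal

/-- If `g ∈ L¹_loc(∂T, ν)` then
`f(x) = m_ν(x)⁻¹ ∫_{∂T_x} g dν` is harmonic on `T`. -/
theorem stmt4 {T : Type*} [Nonempty T] (par : T → T) (lev : T → ℤ)
    (hlev : ∀ x : T, lev (par x) = lev x + 1)
    (hfin : ∀ x : T, {y : T | par y = x}.Finite)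
    (hsucc : ∀ x : T, ∃ y : T, par y = x)
    (hconn : ∀ x y : T, ∃ n m : ℕ, par^[n] x = par^[m] y)
    (ν : Measure (PBoundary par lev))
    (hν : ∀ x : T, 0 < ν (sector par lev x) ∧ ν (sector par lev x) < ⊤)
    (g : PBoundary par lev → ℝ)
    (hg : ∀ x : T, IntegrableOn g (sector par lev x) ν) :
    Harmonic par lev ν
      (fun x : T => (mnu par lev ν x)⁻¹ * ∫ ω in sector par lev x, g ω ∂ν) := by
  intro x
  classical
  have hmeas : ∀ y : T, MeasurableSet (sector par lev y) := fun y =>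
    MeasurableSpace.measurableSet_generateFrom (Set.mem_range_self y)
  have hlevy : ∀ y : T, par y = x → lev y = lev x - 1 := by
    intro y hy
    have := hlev y
    rw [hy] at this
    omega
  set s : Finset T := (hfin x).toFinset with hs
  have hsc : (s : Set T) = {y : T | par y = x} := (hfin x).coe_toFinset
  have hunion : sector par lev x = ⋃ y ∈ s, sector par lev y := by
    ext ω
    simp only [Set.mem_iUnion, sector, Set.mem_setOf_eq]
    constructor
    · intro h
      refine ⟨ω.1 (lev x - 1), ?_, ?_⟩
      · have hp : par (ω.1 (lev x - 1)) = ω.1 (lev x - 1 + 1) := ω.2.2 _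
        rw [sub_add_cancel, h] at hp
        simpa [hs, Set.Finite.mem_toFinset] using hp
      · rw [ω.2.1]
    · rintro ⟨y, hy, hω⟩
      have hy' : par y = x := by simpa [hs, Set.Finite.mem_toFinset] using hy
      have hl : lev y = lev x - 1 := hlevy y hy'
      have hp : par (ω.1 (lev y)) = ω.1 (lev y + 1) := ω.2.2 _
      rw [hω, hy'] at hp
      rw [show lev x = lev y + 1 by omega, ← hp]
  have hdisj : (s : Set T).PairwiseDisjoint (sector par lev) := by
    intro y₁ h₁ y₂ h₂ hne
    have h₁' : par y₁ = x := by rwa [hsc] at h₁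
    have h₂' : par y₂ = x := by rwa [hsc] at h₂
    refine Set.disjoint_left.mpr fun ω hω₁ hω₂ => hne ?_
    have e₁ : ω.1 (lev y₁) = y₁ := hω₁
    have e₂ : ω.1 (lev y₂) = y₂ := hω₂
    rw [hlevy y₁ h₁'] at e₁
    rw [hlevy y₂ h₂'] at e₂
    rw [← e₁, ← e₂]
  have hint : ∀ y ∈ s, IntegrableOn g (sector par lev y) ν := fun y _ => hg y
  have hsum : ∫ ω in sector par lev x, g ω ∂ν
      = ∑ y ∈ s, ∫ ω in sector par lev y, g ω ∂ν := by
    rw [hunion]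
    exact integral_biUnion_finset s (fun y _ => hmeas y) hdisj hint
  have hmne : ∀ y : T, mnu par lev ν y ≠ 0 := by
    intro y
    have := hν y
    exact (ENNReal.toReal_pos this.1.ne' this.2.ne).ne'
  simp only
  rw [← hsc, finsum_mem_coe_finset, hsum, Finset.mul_sum]
  refine Finset.sum_congr rfl fun y _ => ?_
  rw [div_eq_mul_inv]
  have := hmne y
  field_simp
end

section
/- For every p ∈ [1, ∞) and every g ∈ L^p(∂T, ν) one has ‖𝒫g‖_{H^p} ≤ ‖g‖_{L^p(∂T,ν)}, i.e. sup_{k ∈ ℤ} Σ_{x : ℓ(x) = k} |𝒫g(x)|^p m_ν(x) ≤ ∫_{∂T} |g|^p dν. -/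
open MeasureTheory
open scoped ENNReal NNReal

/-- The Poisson integral operator `𝒫 g (x) = m_ν(x)⁻¹ ∫_{∂T_x} g dν`. -/
noncomputable def poisson {T : Type*} (par : T → T) (lev : T → ℤ)
    (ν : Measure (PBoundary par lev)) (g : PBoundary par lev → ℝ) (x : T) : ℝ :=
  (mnu par lev ν x)⁻¹ * ∫ ω in sector par lev x, g ω ∂ν

/-- For every `p ∈ [1,∞)` and `g ∈ L^p(∂T,ν)` one has
`‖𝒫g‖_{H^p}^p = sup_k Σ_{ℓ(x)=k} |𝒫g(x)|^p m_ν(x) ≤ ∫_{∂T} |g|^p dν`. -/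
theorem stmt5 {T : Type*} [Nonempty T] (par : T → T) (lev : T → ℤ)
    (hlev : ∀ x : T, lev (par x) = lev x + 1)
    (hfin : ∀ x : T, {y : T | par y = x}.Finite)
    (hsucc : ∀ x : T, ∃ y : T, par y = x)
    (hconn : ∀ x y : T, ∃ n m : ℕ, par^[n] x = par^[m] y)
    (ν : Measure (PBoundary par lev))
    (hν : ∀ x : T, 0 < ν (sector par lev x) ∧ ν (sector par lev x) < ⊤)
    (p : ℝ) (hp : 1 ≤ p)
    (g : PBoundary par lev → ℝ) (hg : MemLp g (ENNReal.ofReal p) ν) :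
    ⨆ k : ℤ, ∑' x : {x : T // lev x = k},
        ENNReal.ofReal (|poisson par lev ν g x.1| ^ p) * ν (sector par lev x.1)
      ≤ ∫⁻ ω, ENNReal.ofReal (|g ω| ^ p) ∂ν := by
  have hp0 : (0:ℝ) < p := lt_of_lt_of_le one_pos hp
  have hsec_meas : ∀ x : T, MeasurableSet (sector par lev x) := fun x =>
    MeasurableSpace.measurableSet_generateFrom ⟨x, rfl⟩
  -- Key pointwise (per vertex) estimate: Jensen / Hölder inequality.
  have key : ∀ x : T,
      ENNReal.ofReal (|poisson par lev ν g x| ^ p) * ν (sector par lev x)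
        ≤ ∫⁻ ω in sector par lev x, ENNReal.ofReal (|g ω| ^ p) ∂ν := by
    intro x
    set s := sector par lev x with hs
    set L : ℝ≥0∞ := ∫⁻ ω in s, ENNReal.ofReal (|g ω| ^ p) ∂ν with hL
    have hν0 : ν s ≠ 0 := (hν x).1.ne'
    have hνt : ν s ≠ ⊤ := (hν x).2.ne
    haveI : IsFiniteMeasure (ν.restrict s) :=
      ⟨by rwa [Measure.restrict_apply_univ, lt_top_iff_ne_top]⟩
    have hgr : MemLp g (ENNReal.ofReal p) (ν.restrict s) := hg.restrict s
    have hgint : Integrable g (ν.restrict s) := by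
      refine memLp_one_iff_integrable.mp (hgr.mono_exponent ?_)
      simpa using ENNReal.one_le_ofReal.mpr hp
    have hmnn : 0 ≤ mnu par lev ν x := ENNReal.toReal_nonneg
    have habs_meas : AEMeasurable (fun ω => ENNReal.ofReal |g ω|) (ν.restrict s) :=
      ENNReal.measurable_ofReal.comp_aemeasurable
        (continuous_abs.measurable.comp_aemeasurable hgint.aemeasurable)
    -- |∫ g| bounded by lintegral of |g|
    have hIB : ENNReal.ofReal |∫ ω in s, g ω ∂ν| ≤ ∫⁻ ω in s, ENNReal.ofReal |g ω| ∂ν := by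
      rw [← ofReal_integral_eq_lintegral_ofReal hgint.abs
        (Filter.Eventually.of_forall fun ω => abs_nonneg _)]
      exact ENNReal.ofReal_le_ofReal
        (by simpa [Real.norm_eq_abs] using norm_integral_le_integral_norm (μ := ν.restrict s) g)
    -- Hölder: (∫⁻ |g|)^p ≤ L * (ν s)^(p-1)
    have hHolder : (∫⁻ ω in s, ENNReal.ofReal |g ω| ∂ν) ^ p ≤ L * (ν s) ^ (p - 1) := by
      rcases eq_or_lt_of_le hp with hp1 | hp1
      · -- p = 1
        subst hp1
        simp [hL, Real.rpow_one]
      · -- p > 1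
        set q := p / (p - 1) with hq
        have hpq : p.HolderConjugate q := Real.HolderConjugate.conjExponent hp1
        have hH := ENNReal.lintegral_mul_le_Lp_mul_Lq (ν.restrict s) hpq habs_meas
          (aemeasurable_const (b := (1:ℝ≥0∞)))
        simp only [Pi.mul_apply, mul_one, ENNReal.one_rpow, lintegral_const, one_mul,
          Measure.restrict_apply_univ] at hH
        have h1 : (∫⁻ ω in s, ENNReal.ofReal |g ω| ∂ν) ^ p
            ≤ ((∫⁻ ω in s, ENNReal.ofReal |g ω| ^ p ∂ν) ^ (1/p) * (ν s) ^ (1/q)) ^ p :=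
          ENNReal.rpow_le_rpow hH hp0.le
        refine h1.trans (le_of_eq ?_)
        rw [ENNReal.mul_rpow_of_nonneg _ _ hp0.le, ← ENNReal.rpow_mul, ← ENNReal.rpow_mul]
        have e1 : 1/p * p = 1 := by field_simp
        have e2 : 1/q * p = p - 1 := by
          rw [hq]
          field_simp
        rw [e1, e2, ENNReal.rpow_one]
        congr 1
        exact lintegral_congr fun ω =>
          ENNReal.ofReal_rpow_of_nonneg (abs_nonneg _) hp0.le
      
    -- put things together
    have hm : ENNReal.ofReal ((mnu par lev ν x)⁻¹) = (ν s)⁻¹ := by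
      rw [mnu, ENNReal.ofReal_inv_of_pos (ENNReal.toReal_pos hν0 hνt),
        ENNReal.ofReal_toReal hνt]
    have hpois : ENNReal.ofReal (|poisson par lev ν g x| ^ p)
        ≤ ((ν s) ^ p)⁻¹ * (L * (ν s) ^ (p - 1)) := by
      have habs : |poisson par lev ν g x|
          = (mnu par lev ν x)⁻¹ * |∫ ω in s, g ω ∂ν| := by
        rw [poisson, abs_mul, abs_of_nonneg (inv_nonneg.mpr hmnn)]
      rw [habs, Real.mul_rpow (inv_nonneg.mpr hmnn) (abs_nonneg _),
        ENNReal.ofReal_mul (Real.rpow_nonneg (inv_nonneg.mpr hmnn) _),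
        ← ENNReal.ofReal_rpow_of_nonneg (inv_nonneg.mpr hmnn) hp0.le,
        ← ENNReal.ofReal_rpow_of_nonneg (abs_nonneg _) hp0.le, hm, ENNReal.inv_rpow]
      exact mul_le_mul_right ((ENNReal.rpow_le_rpow hIB hp0.le).trans hHolder) _
    calc ENNReal.ofReal (|poisson par lev ν g x| ^ p) * ν s
        ≤ ((ν s) ^ p)⁻¹ * (L * (ν s) ^ (p - 1)) * ν s := mul_le_mul_left hpois _
      _ = L * ((ν s) ^ (p - 1) * (ν s) ^ (1:ℝ) * ((ν s) ^ p)⁻¹) := by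
          rw [ENNReal.rpow_one]; ring
      _ = L := by
          rw [← ENNReal.rpow_add _ _ hν0 hνt, sub_add_cancel,
            ENNReal.mul_inv_cancel (by simp [ENNReal.rpow_eq_zero_iff, hν0, hνt, hp0.ne'])
              (by simp [ENNReal.rpow_eq_top_iff, hν0, hνt, hp0])]
          exact mul_one L
  -- Sum over a level: sectors at a fixed level are pairwise disjoint.
  refine iSup_le fun k => ?_
  rw [ENNReal.tsum_eq_iSup_sum]
  refine iSup_le fun F => ?_
  have hdisj : Set.PairwiseDisjoint (↑F) (fun x : {x : T // lev x = k} => sector par lev x.1) := by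
    intro a _ b _ hab
    refine Set.disjoint_left.mpr fun ω hωa hωb => hab ?_
    have : a.1 = b.1 := by
      have ha : ω.1 (lev a.1) = a.1 := hωa
      have hb : ω.1 (lev b.1) = b.1 := hωb
      rw [a.2] at ha; rw [b.2] at hb
      rw [← ha, ← hb]
    exact Subtype.ext this
  calc ∑ x ∈ F, ENNReal.ofReal (|poisson par lev ν g x.1| ^ p) * ν (sector par lev x.1)
      ≤ ∑ x ∈ F, ∫⁻ ω in sector par lev x.1, ENNReal.ofReal (|g ω| ^ p) ∂ν :=
        Finset.sum_le_sum fun x _ => key x.1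
    _ = ∫⁻ ω in ⋃ x ∈ F, sector par lev (x:{x : T // lev x = k}).1,
          ENNReal.ofReal (|g ω| ^ p) ∂ν :=
        (lintegral_biUnion_finset hdisj (fun x _ => hsec_meas x.1) _).symm
    _ ≤ ∫⁻ ω, ENNReal.ofReal (|g ω| ^ p) ∂ν := setLIntegral_le_lintegral _ _
end
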